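/- Let (X,d) be a complete and separable metric space, m a Radon measure on X (a Borel measure finite on bounded sets), α ≥ 0, and define the α-upper density of m at x by θ̄_α(m,x) := limsup_{r↓0} m(B_r(x))/(ω_α r^α). Then for every Borel set B ⊆ X and every c > 0: if θ̄_α(m,x) ≥ c for all x ∈ B, then m(B) ≥ c · H^α(B). -/

import Mathlib

open MeasureTheory Filter Set Topology
open scoped ENNReal NNReal

/-- `ω_α = π^(α/2) / Γ(α/2 + 1)`, the normalizing constant for the `α`-dimensional
Hausdorff measure (for integer `α` it is the volume of the unit ball of `ℝ^α`). -/
noncomputable def omegaHaus (α : ℝ) : ℝ := Real.pi ^ (α / 2) / Real.Gamma (α / 2 + 1)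

/-- The `α`-dimensional Hausdorff measure normalized as
`H^α(A) = lim_{δ↓0} inf {Σ_i ω_α (diam E_i / 2)^α : A ⊆ ⋃_i E_i, diam E_i ≤ δ}`,
i.e. `(ω_α / 2^α)` times Mathlib's Hausdorff measure `μH[α]`. -/
noncomputable def normHausdorffMeasure (α : ℝ) (X : Type*) [EMetricSpace X]
    [MeasurableSpace X] [BorelSpace X] : Measure X :=
  (ENNReal.ofReal (omegaHaus α / 2 ^ α)) • μH[α]

/-- The `α`-upper density of a measure `m` at a point `x`:
`θ̄_α(m,x) = limsup_{r↓0} m(B_r(x)) / (ω_α r^α)`. -/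
noncomputable def upperDensity {X : Type*} [MetricSpace X] [MeasurableSpace X]
    (α : ℝ) (m : Measure X) (x : X) : ℝ≥0∞ :=
  Filter.limsup (fun r : ℝ => m (Metric.ball x r) / ENNReal.ofReal (omegaHaus α * r ^ α))
    (𝓝[>] (0 : ℝ))



private lemma diam_closedBall_le' {X : Type*} [MetricSpace X] (x : X) (r : ℝ) :
    EMetric.diam (Metric.closedBall x r) ≤ ENNReal.ofReal (2 * r) := by
  refine EMetric.diam_le fun a ha b hb => ?_
  rw [edist_dist]
  refine ENNReal.ofReal_le_ofReal ?_
  calc dist a b ≤ dist a x + dist x b := dist_triangle _ _ _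
    _ ≤ r + r := add_le_add ha (by rw [dist_comm]; exact hb)
    _ = 2 * r := by ring

private lemma exists_cover_aux {X : Type*} [MetricSpace X] [MeasurableSpace X] [BorelSpace X]
    (m : Measure X) {U : Set X} (hU : IsOpen U) (hUfin : m U ≠ ∞)
    {B : Set X} (hBU : B ⊆ U) {t0 : ℝ≥0∞} (ht0 : 0 < t0) (ht0' : t0 ≠ ∞)
    {α : ℝ} (hα : 0 ≤ α)
    (hfine : ∀ x ∈ B, ∀ ε : ℝ, 0 < ε → ∃ r : ℝ, 0 < r ∧ r < ε ∧
      t0 * ENNReal.ofReal (r ^ α) ≤ m (Metric.ball x r))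
    {δ : ℝ} (hδ : 0 < δ) {ε : ℝ≥0∞} (hε : 0 < ε) :
    ∃ T : ℕ → Set X, (B ⊆ ⋃ n, T n) ∧ (∀ n, EMetric.diam (T n) ≤ ENNReal.ofReal (10 * δ)) ∧
      ∑' n, ⨆ _ : (T n).Nonempty, EMetric.diam (T n) ^ α ≤
        ENNReal.ofReal (2 ^ α) * (m U / t0) + ε := by
  classical
  set F : Set (X × ℝ) := {p | p.1 ∈ B ∧ 0 < p.2 ∧ p.2 ≤ δ ∧ Metric.ball p.1 p.2 ⊆ U ∧
    t0 * ENNReal.ofReal (p.2 ^ α) ≤ m (Metric.ball p.1 p.2)} with hF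
  -- fineness of the family F
  have hFfine : ∀ x ∈ B, ∀ ε' : ℝ, 0 < ε' → ∃ r : ℝ, 0 < r ∧ r < ε' ∧ (x, r) ∈ F := by
    intro x hx ε' hε'
    obtain ⟨ε1, hε1, hball⟩ := Metric.isOpen_iff.1 hU x (hBU hx)
    obtain ⟨r, hr0, hrlt, hrm⟩ := hfine x hx (min ε' (min ε1 δ)) (by positivity)
    refine ⟨r, hr0, hrlt.trans_le (min_le_left _ _), hx, hr0, ?_, ?_, hrm⟩
    · exact le_of_lt (hrlt.trans_le ((min_le_right _ _).trans (min_le_right _ _)))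
    · exact (Metric.ball_subset_ball
        (hrlt.trans_le ((min_le_right _ _).trans (min_le_left _ _))).le).trans hball
  -- Vitali covering lemma
  obtain ⟨u, huF, hdisj, hcov⟩ := Vitali.exists_disjoint_subfamily_covering_enlargement
    (fun p : X × ℝ => Metric.closedBall p.1 p.2) F (fun p => p.2) 2 one_lt_two
    (fun a ha => ha.2.1.le) δ (fun a ha => ha.2.2.1)
    (fun a ha => ⟨a.1, Metric.mem_closedBall_self ha.2.1.le⟩)
  have hdisj' : u.PairwiseDisjoint (fun p : X × ℝ => Metric.ball p.1 p.2) :=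
    fun a ha b hb hab => (hdisj ha hb hab).mono
      Metric.ball_subset_closedBall Metric.ball_subset_closedBall
  have hballU : ∀ b : ↥u, Metric.ball b.1.1 b.1.2 ⊆ U := fun b => (huF b.2).2.2.2.1
  have hballm : ∀ b : ↥u, t0 * ENNReal.ofReal (b.1.2 ^ α) ≤ m (Metric.ball b.1.1 b.1.2) :=
    fun b => (huF b.2).2.2.2.2
  have hbpos : ∀ b : ↥u, 0 < b.1.2 := fun b => (huF b.2).2.1
  have hbδ : ∀ b : ↥u, b.1.2 ≤ δ := fun b => (huF b.2).2.2.1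
  have hballpos : ∀ b : ↥u, 0 < m (Metric.ball b.1.1 b.1.2) := by
    intro b
    refine lt_of_lt_of_le ?_ (hballm b)
    exact ENNReal.mul_pos ht0.ne' (ENNReal.ofReal_pos.2 (Real.rpow_pos_of_pos (hbpos b) α)).ne'
  have hdisjsub : Pairwise (Function.onFun Disjoint fun b : ↥u => Metric.ball b.1.1 b.1.2) := by
    intro a b hab
    exact hdisj' a.2 b.2 (fun h => hab (Subtype.ext h))
  have hUnionfin : m (⋃ b : ↥u, Metric.ball b.1.1 b.1.2) ≠ ∞ :=
    ne_top_of_le_ne_top hUfin (measure_mono (iUnion_subset hballU))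
  -- countability
  have hucnt : u.Countable := by
    have h := MeasureTheory.Measure.countable_meas_pos_of_disjoint_of_meas_iUnion_ne_top
      (ι := ↥u) m (As := fun b => Metric.ball b.1.1 b.1.2)
      (fun b => Metric.isOpen_ball.measurableSet) hdisjsub hUnionfin
    have heq : {b : ↥u | 0 < m (Metric.ball b.1.1 b.1.2)} = univ :=
      eq_univ_of_forall fun b => hballpos b
    rw [heq] at h
    exact Set.countable_coe_iff.1 (Set.countable_univ_iff.1 h)
  haveI : Countable ↥u := hucnt.to_subtype
  -- the sum of radii to the α
  have hS : t0 * ∑' b : ↥u, ENNReal.ofReal (b.1.2 ^ α) ≤ m U := by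
    calc t0 * ∑' b : ↥u, ENNReal.ofReal (b.1.2 ^ α)
        = ∑' b : ↥u, t0 * ENNReal.ofReal (b.1.2 ^ α) := ENNReal.tsum_mul_left.symm
      _ ≤ ∑' b : ↥u, m (Metric.ball b.1.1 b.1.2) := ENNReal.tsum_le_tsum hballm
      _ = m (⋃ b : ↥u, Metric.ball b.1.1 b.1.2) :=
          (measure_iUnion hdisjsub fun b => Metric.isOpen_ball.measurableSet).symm
      _ ≤ m U := measure_mono (iUnion_subset hballU)
  have hSfin : (∑' b : ↥u, ENNReal.ofReal (b.1.2 ^ α)) ≠ ∞ := by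
    intro h
    rw [h, ENNReal.mul_top ht0.ne'] at hS
    exact hUfin (top_le_iff.1 hS)
  have hSle : (∑' b : ↥u, ENNReal.ofReal (b.1.2 ^ α)) ≤ m U / t0 :=
    (ENNReal.le_div_iff_mul_le (Or.inl ht0.ne') (Or.inl ht0')).2 (by rwa [mul_comm])
  -- tail estimate
  have hε₂pos : 0 < ε / ENNReal.ofReal (10 ^ α) :=
    ENNReal.div_pos hε.ne' ENNReal.ofReal_ne_top
  obtain ⟨w, hw⟩ := ((ENNReal.tendsto_tsum_compl_atTop_zero hSfin).eventually
      (gt_mem_nhds hε₂pos)).exists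
  -- injection into ℕ and the cover
  obtain ⟨f, hf⟩ := exists_injective_nat ↥u
  set g : ↥u → Set X := fun b =>
    if b ∈ w then Metric.closedBall b.1.1 b.1.2 else Metric.closedBall b.1.1 (5 * b.1.2) with hg
  set T : ℕ → Set X := fun n => if h : ∃ b, f b = n then g h.choose else ∅ with hT
  have hTf : ∀ b : ↥u, T (f b) = g b := by
    intro b
    have h : ∃ b', f b' = f b := ⟨b, rfl⟩
    simp only [hT, dif_pos h]
    rw [hf h.choose_spec]
  -- the enlarged balls cover B
  have hcover : B ⊆ ⋃ b : ↥u, g b := by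
    intro z hz
    by_cases hzw : ∃ b : ↥u, b ∈ w ∧ z ∈ Metric.closedBall b.1.1 b.1.2
    · obtain ⟨b, hbw, hzb⟩ := hzw
      exact mem_iUnion.2 ⟨b, by simp only [hg, if_pos hbw]; exact hzb⟩
    · push_neg at hzw
      set K : Set X := ⋃ b ∈ w, Metric.closedBall (b : ↥u).1.1 (b : ↥u).1.2 with hK
      have hKclosed : IsClosed K :=
        (w.finite_toSet).isClosed_biUnion fun b _ => Metric.isClosed_closedBall
      have hzK : z ∈ Kᶜ := by
        intro hzmem
        rw [hK, mem_iUnion₂] at hzmem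
        obtain ⟨b, hbw, hzb⟩ := hzmem
        exact hzw b hbw hzb
      obtain ⟨ε3, hε3, hball3⟩ := Metric.isOpen_iff.1 hKclosed.isOpen_compl z hzK
      obtain ⟨r, hr0, hrlt, hrF⟩ := hFfine z hz ε3 hε3
      obtain ⟨b, hbu, hbi, hble⟩ := hcov (z, r) hrF
      obtain ⟨y, hy1, hy2⟩ := hbi
      have hy1' : dist y z ≤ r := hy1
      have hy2' : dist y b.1 ≤ b.2 := hy2
      set b' : ↥u := ⟨b, hbu⟩ with hb'
      have hbnw : b' ∉ w := by
        intro hbw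
        have hyK : y ∈ K := mem_iUnion₂.2 ⟨b', hbw, hy2⟩
        exact hball3 (lt_of_le_of_lt hy1' hrlt) hyK
      have hb2 : 0 < b.2 := (huF hbu).2.1
      have hdist : dist z b.1 ≤ 5 * b.2 := by
        calc dist z b.1 ≤ dist z y + dist y b.1 := dist_triangle _ _ _
          _ ≤ r + b.2 := add_le_add (by rw [dist_comm]; exact hy1') hy2'
          _ ≤ 2 * b.2 + b.2 := by linarith [hble]
          _ ≤ 5 * b.2 := by linarith
      refine mem_iUnion.2 ⟨b', ?_⟩
      simp only [hg, if_neg hbnw]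
      exact hdist
  have hBT : B ⊆ ⋃ n, T n := by
    intro z hz
    obtain ⟨b, hb⟩ := mem_iUnion.1 (hcover hz)
    exact mem_iUnion.2 ⟨f b, by rw [hTf b]; exact hb⟩
  -- diameter bounds
  have hdiamg : ∀ b : ↥u, EMetric.diam (g b) ≤ ENNReal.ofReal (10 * b.1.2) := by
    intro b
    by_cases hbw : b ∈ w
    · simp only [hg, if_pos hbw]
      exact (diam_closedBall_le' _ _).trans
        (ENNReal.ofReal_le_ofReal (by nlinarith [hbpos b]))
    · simp only [hg, if_neg hbw]
      exact (diam_closedBall_le' _ _).trans (le_of_eq (by rw [show 2 * (5 * b.1.2) = 10 * b.1.2 by ring]))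
  have hdiamT : ∀ n, EMetric.diam (T n) ≤ ENNReal.ofReal (10 * δ) := by
    intro n
    by_cases h : ∃ b, f b = n
    · have hTn : T n = g h.choose := by rw [hT]; simp only [dif_pos h]
      rw [hTn]
      exact (hdiamg _).trans (ENNReal.ofReal_le_ofReal (by linarith [hbδ h.choose]))
    · have hTn : T n = (∅ : Set X) := by rw [hT]; simp only [dif_neg h]
      rw [hTn]
      exact (le_of_eq Metric.ediam_empty).trans (zero_le)
  refine ⟨T, hBT, hdiamT, ?_⟩
  -- the sum over the cover
  have hsum_eq : (∑' n, ⨆ _ : (T n).Nonempty, EMetric.diam (T n) ^ α)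
      = ∑' b : ↥u, ⨆ _ : (g b).Nonempty, EMetric.diam (g b) ^ α := by
    refine tsum_eq_tsum_of_ne_zero_bij (fun b => f b.1) (fun x y h => Subtype.ext (hf h)) ?_ ?_
    · intro n hn
      by_cases h : ∃ b, f b = n
      · refine ⟨⟨h.choose, ?_⟩, h.choose_spec⟩
        have hTn : T n = g h.choose := by rw [hT]; simp only [dif_pos h]
        rw [Function.mem_support, ← hTn]
        exact hn
      · exfalso
        apply hn
        have hTn : T n = (∅ : Set X) := by rw [hT]; simp only [dif_neg h]
        simp [hTn]
    · intro x
      rw [hTf]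
  rw [hsum_eq]
  -- termwise bound
  have hgb : ∀ b : ↥u, (⨆ _ : (g b).Nonempty, EMetric.diam (g b) ^ α) ≤
      ENNReal.ofReal (2 ^ α) * ENNReal.ofReal (b.1.2 ^ α)
      + (if b ∈ w then 0 else ENNReal.ofReal (10 ^ α) * ENNReal.ofReal (b.1.2 ^ α)) := by
    intro b
    have hdg : (⨆ _ : (g b).Nonempty, EMetric.diam (g b) ^ α) ≤ EMetric.diam (g b) ^ α :=
      iSup_le fun _ => le_rfl
    by_cases hbw : b ∈ w
    · rw [if_pos hbw, add_zero]
      refine hdg.trans ?_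
      have h1 : EMetric.diam (g b) ≤ ENNReal.ofReal (2 * b.1.2) := by
        simp only [hg, if_pos hbw]; exact diam_closedBall_le' _ _
      calc EMetric.diam (g b) ^ α ≤ ENNReal.ofReal (2 * b.1.2) ^ α :=
            ENNReal.rpow_le_rpow h1 hα
        _ = ENNReal.ofReal ((2 * b.1.2) ^ α) :=
            ENNReal.ofReal_rpow_of_nonneg (by linarith [hbpos b]) hα
        _ = ENNReal.ofReal (2 ^ α * b.1.2 ^ α) := by
            rw [Real.mul_rpow (by norm_num) (hbpos b).le]
        _ = ENNReal.ofReal (2 ^ α) * ENNReal.ofReal (b.1.2 ^ α) :=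
            ENNReal.ofReal_mul (by positivity)
    · rw [if_neg hbw]
      refine le_trans ?_ le_add_self
      refine hdg.trans ?_
      calc EMetric.diam (g b) ^ α ≤ ENNReal.ofReal (10 * b.1.2) ^ α :=
            ENNReal.rpow_le_rpow (hdiamg b) hα
        _ = ENNReal.ofReal ((10 * b.1.2) ^ α) :=
            ENNReal.ofReal_rpow_of_nonneg (by linarith [hbpos b]) hα
        _ = ENNReal.ofReal (10 ^ α * b.1.2 ^ α) := by
            rw [Real.mul_rpow (by norm_num) (hbpos b).le]
        _ = ENNReal.ofReal (10 ^ α) * ENNReal.ofReal (b.1.2 ^ α) :=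
            ENNReal.ofReal_mul (by positivity)
  -- tail sum
  have htail : (∑' b : ↥u, (if b ∈ w then 0
      else ENNReal.ofReal (10 ^ α) * ENNReal.ofReal (b.1.2 ^ α))) ≤ ε := by
    have hw' : (∑' b : {x : ↥u | x ∉ w}, ENNReal.ofReal ((b : ↥u).1.2 ^ α))
        < ε / ENNReal.ofReal (10 ^ α) := hw
    calc (∑' b : ↥u, (if b ∈ w then 0
          else ENNReal.ofReal (10 ^ α) * ENNReal.ofReal (b.1.2 ^ α)))
        = ∑' b : ↥u, Set.indicator {x : ↥u | x ∉ w}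
            (fun b => ENNReal.ofReal (10 ^ α) * ENNReal.ofReal ((b : ↥u).1.2 ^ α)) b := by
          refine tsum_congr fun b => ?_
          by_cases hbw : b ∈ w
          · simp [Set.indicator, hbw]
          · simp [Set.indicator, hbw]
      _ = ∑' b : {x : ↥u | x ∉ w}, ENNReal.ofReal (10 ^ α) * ENNReal.ofReal ((b : ↥u).1.2 ^ α) :=
          (tsum_subtype _ _).symm
      _ = ENNReal.ofReal (10 ^ α) * ∑' b : {x : ↥u | x ∉ w}, ENNReal.ofReal ((b : ↥u).1.2 ^ α) :=
          ENNReal.tsum_mul_left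
      _ ≤ ENNReal.ofReal (10 ^ α) * (ε / ENNReal.ofReal (10 ^ α)) := mul_le_mul_right hw'.le _
      _ ≤ ε := ENNReal.mul_div_le
  calc (∑' b : ↥u, ⨆ _ : (g b).Nonempty, EMetric.diam (g b) ^ α)
      ≤ ∑' b : ↥u, (ENNReal.ofReal (2 ^ α) * ENNReal.ofReal (b.1.2 ^ α)
        + (if b ∈ w then 0 else ENNReal.ofReal (10 ^ α) * ENNReal.ofReal (b.1.2 ^ α))) :=
        ENNReal.tsum_le_tsum hgb
    _ = ENNReal.ofReal (2 ^ α) * (∑' b : ↥u, ENNReal.ofReal (b.1.2 ^ α))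
        + ∑' b : ↥u, (if b ∈ w then 0
          else ENNReal.ofReal (10 ^ α) * ENNReal.ofReal (b.1.2 ^ α)) := by
        rw [ENNReal.tsum_add, ENNReal.tsum_mul_left]
    _ ≤ ENNReal.ofReal (2 ^ α) * (m U / t0) + ε :=
        add_le_add (mul_le_mul_right hSle _) htail

private lemma hausdorff_le_aux {X : Type*} [MetricSpace X] [MeasurableSpace X] [BorelSpace X]
    (m : Measure X) {U : Set X} (hU : IsOpen U) (hUfin : m U ≠ ∞)
    {B : Set X} (hBU : B ⊆ U) {t0 : ℝ≥0∞} (ht0 : 0 < t0) (ht0' : t0 ≠ ∞)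
    {α : ℝ} (hα : 0 ≤ α)
    (hfine : ∀ x ∈ B, ∀ ε : ℝ, 0 < ε → ∃ r : ℝ, 0 < r ∧ r < ε ∧
      t0 * ENNReal.ofReal (r ^ α) ≤ m (Metric.ball x r)) :
    μH[α] B ≤ ENNReal.ofReal (2 ^ α) * (m U / t0) := by
  rw [MeasureTheory.Measure.hausdorffMeasure_apply]
  refine iSup₂_le fun r hr => ?_
  refine ENNReal.le_of_forall_pos_le_add fun η hη _ => ?_
  have hminne : min r 1 ≠ 0 := (lt_min hr zero_lt_one).ne'
  have hminnetop : min r 1 ≠ ∞ := ne_top_of_le_ne_top ENNReal.one_ne_top (min_le_right r 1)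
  have hmin : (0:ℝ) < (min r 1).toReal := ENNReal.toReal_pos hminne hminnetop
  have hδ : (0:ℝ) < (min r 1).toReal / 20 := by linarith
  have hη' : (0:ℝ≥0∞) < η := ENNReal.coe_pos.2 hη
  obtain ⟨T, hcov, hdiam, hsum⟩ := exists_cover_aux m hU hUfin hBU ht0 ht0' hα hfine hδ hη'
  have hdiam' : ∀ n, EMetric.diam (T n) ≤ r := by
    intro n
    refine (hdiam n).trans ?_
    calc ENNReal.ofReal (10 * ((min r 1).toReal / 20))
        ≤ ENNReal.ofReal ((min r 1).toReal) := ENNReal.ofReal_le_ofReal (by linarith)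
      _ ≤ min r 1 := ENNReal.ofReal_toReal_le
      _ ≤ r := min_le_left _ _
  exact le_trans (iInf_le_of_le T (iInf_le_of_le hcov (iInf_le _ hdiam'))) hsum

/-- If `m` is a Borel measure, finite on bounded sets, on a complete separable metric
space `X`, `α ≥ 0`, `B ⊆ X` is Borel and `c > 0` is such that the `α`-upper density of
`m` is `≥ c` at every point of `B`, then `m(B) ≥ c ⬝ H^α(B)`. -/
theorem measure_ge_of_upperDensity_ge {X : Type*} [MetricSpace X] [CompleteSpace X]
    [TopologicalSpace.SeparableSpace X] [MeasurableSpace X] [BorelSpace X]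
    (m : Measure X) (hm : ∀ s : Set X, Bornology.IsBounded s → m s < ∞)
    (α : ℝ) (hα : 0 ≤ α) (B : Set X) (hB : MeasurableSet B)
    (c : ℝ) (hc : 0 < c)
    (hdens : ∀ x ∈ B, ENNReal.ofReal c ≤ upperDensity α m x) :
    ENNReal.ofReal c * normHausdorffMeasure α X B ≤ m B := by
  classical
  rcases eq_top_or_lt_top (m B) with hmB | hmB
  · rw [hmB]; exact le_top
  haveI : SecondCountableTopology X := UniformSpace.secondCountable_of_separable X
  haveI : IsLocallyFiniteMeasure m :=
    ⟨fun x => ⟨Metric.ball x 1, Metric.ball_mem_nhds x one_pos, hm _ Metric.isBounded_ball⟩⟩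
  have hω0 : 0 < omegaHaus α :=
    div_pos (Real.rpow_pos_of_pos Real.pi_pos _) (Real.Gamma_pos_of_pos (by linarith))
  have h2α : (0:ℝ) < 2 ^ α := Real.rpow_pos_of_pos two_pos α
  have key : ∀ τ : ℝ, 0 < τ → τ < 1 →
      ENNReal.ofReal (τ * (c * omegaHaus α / 2 ^ α)) * μH[α] B ≤ m B := by
    intro τ hτ0 hτ1
    have ht0 : (0:ℝ≥0∞) < ENNReal.ofReal (τ * c * omegaHaus α) :=
      ENNReal.ofReal_pos.2 (mul_pos (mul_pos hτ0 hc) hω0)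
    have ht0' : ENNReal.ofReal (τ * c * omegaHaus α) ≠ ∞ := ENNReal.ofReal_ne_top
    have hfine : ∀ x ∈ B, ∀ ε : ℝ, 0 < ε → ∃ r : ℝ, 0 < r ∧ r < ε ∧
        ENNReal.ofReal (τ * c * omegaHaus α) * ENNReal.ofReal (r ^ α) ≤ m (Metric.ball x r) := by
      intro x hx ε hε
      have h1 : ENNReal.ofReal (τ * c) <
          Filter.limsup (fun r : ℝ =>
            m (Metric.ball x r) / ENNReal.ofReal (omegaHaus α * r ^ α)) (𝓝[>] (0:ℝ)) := by
        refine lt_of_lt_of_le ?_ (hdens x hx)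
        exact (ENNReal.ofReal_lt_ofReal_iff hc).2 (by nlinarith)
      have freq := Filter.frequently_lt_of_lt_limsup (by isBoundedDefault) h1
      have hIoo : Ioo (0:ℝ) ε ∈ 𝓝[>] (0:ℝ) := Ioo_mem_nhdsGT_of_mem ⟨le_refl 0, hε⟩
      obtain ⟨r, hlt, hmem⟩ :=
        (freq.and_eventually (eventually_of_mem hIoo fun y hy => hy)).exists
      refine ⟨r, hmem.1, hmem.2, ?_⟩
      have hmul := ENNReal.mul_lt_of_lt_div hlt
      refine le_of_lt (lt_of_le_of_lt (le_of_eq ?_) hmul)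
      rw [← ENNReal.ofReal_mul (by positivity),
        ← ENNReal.ofReal_mul (mul_pos hτ0 hc).le]
      congr 1
      ring
    refine ENNReal.le_of_forall_pos_le_add fun η hη _ => ?_
    obtain ⟨U, hBU, hUopen, hUlt⟩ :=
      Set.exists_isOpen_lt_add B hmB.ne (ε := (η : ℝ≥0∞)) (by exact_mod_cast hη.ne')
    have hUfin : m U ≠ ∞ :=
      (hUlt.trans (ENNReal.add_lt_top.2 ⟨hmB, ENNReal.coe_lt_top⟩)).ne
    have hH := hausdorff_le_aux m hUopen hUfin hBU ht0 ht0' hα hfine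
    calc ENNReal.ofReal (τ * (c * omegaHaus α / 2 ^ α)) * μH[α] B
        ≤ ENNReal.ofReal (τ * (c * omegaHaus α / 2 ^ α)) *
          (ENNReal.ofReal (2 ^ α) * (m U / ENNReal.ofReal (τ * c * omegaHaus α))) :=
          mul_le_mul_right hH _
      _ = ENNReal.ofReal (τ * c * omegaHaus α) *
          (m U / ENNReal.ofReal (τ * c * omegaHaus α)) := by
          rw [← mul_assoc, ← ENNReal.ofReal_mul (by positivity)]
          congr 2
          field_simp
      _ ≤ m U := ENNReal.mul_div_le
      _ ≤ m B + η := hUlt.le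
  rw [normHausdorffMeasure, Measure.smul_apply, smul_eq_mul, ← mul_assoc,
    ← ENNReal.ofReal_mul hc.le]
  have htends : Tendsto (fun τ : ℝ => ENNReal.ofReal (τ * (c * omegaHaus α / 2 ^ α)) * μH[α] B)
      (𝓝[<] (1:ℝ)) (𝓝 (ENNReal.ofReal (c * (omegaHaus α / 2 ^ α)) * μH[α] B)) := by
    have h1 : Tendsto (fun τ : ℝ => τ * (c * omegaHaus α / 2 ^ α)) (𝓝[<] (1:ℝ))
        (𝓝 (c * omegaHaus α / 2 ^ α)) := by
      have h := (continuous_mul_right (c * omegaHaus α / 2 ^ α)).tendsto (1:ℝ)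
      rw [one_mul] at h
      exact h.mono_left nhdsWithin_le_nhds
    have h2 := (ENNReal.continuous_ofReal.tendsto _).comp h1
    have h3 := ENNReal.Tendsto.mul_const (b := μH[α] B) h2
      (Or.inl (ENNReal.ofReal_pos.2 (by positivity)).ne')
    simpa [Function.comp, mul_div_assoc] using h3
  refine le_of_tendsto htends ?_
  filter_upwards [Ioo_mem_nhdsLT_of_mem (show (1:ℝ) ∈ Ioc (0:ℝ) 1 from ⟨zero_lt_one, le_refl 1⟩)]
    with τ hτ
  exact key τ hτ.1 hτ.2
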